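/- arXiv:1702.05004 — 3 statements merged into one kernel-verified Lean document; each statement's English description precedes it below -/
import Mathlib

section
/- Let $g \in \mathrm{GSp}_{2n}$ (over any field or commutative ring). Then the matrix $X = Q_n\, \iota(g, g)\, Q_n^{-1}$ lies in the Siegel parabolic $P_{4n}$ of $\mathrm{GSp}_{4n}$ (i.e., its lower-left $2n \times 2n$ block is zero), and moreover $d(X) = 1$, where for $X = \begin{pmatrix} A & * \\ 0 & v\,{}^t A^{-1} \end{pmatrix} n'$ with $v$ the multiplier, $A \in \mathrm{GL}_{2n}$, and $n'$ in the unipotent radical, one defines $d(X) = v^{-n}\det(A)$. -/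
open Matrix

/-- The standard symplectic form `J` on a doubled index type. -/
def Jmat (m : Type*) [DecidableEq m] [Fintype m] (R : Type*) [CommRing R] :
    Matrix (m ⊕ m) (m ⊕ m) R :=
  Matrix.fromBlocks 0 1 (-1) 0

/-- The embedding `ι : GSp₂ₙ × GSp₂ₙ → GSp₄ₙ` of the paper (embedding-defn). -/
def iota {n : ℕ} {R : Type*} [CommRing R] (g h : Matrix (Fin n ⊕ Fin n) (Fin n ⊕ Fin n) R) :
    Matrix ((Fin n ⊕ Fin n) ⊕ (Fin n ⊕ Fin n)) ((Fin n ⊕ Fin n) ⊕ (Fin n ⊕ Fin n)) R :=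
  Matrix.fromBlocks
    (Matrix.fromBlocks g.toBlocks₁₁ 0 0 h.toBlocks₁₁)
    (Matrix.fromBlocks (-g.toBlocks₁₂) 0 0 h.toBlocks₁₂)
    (Matrix.fromBlocks (-g.toBlocks₂₁) 0 0 h.toBlocks₂₁)
    (Matrix.fromBlocks g.toBlocks₂₂ 0 0 h.toBlocks₂₂)

/-- The matrix `Q_n` of the paper. -/
def Qmat (n : ℕ) (R : Type*) [CommRing R] :
    Matrix ((Fin n ⊕ Fin n) ⊕ (Fin n ⊕ Fin n)) ((Fin n ⊕ Fin n) ⊕ (Fin n ⊕ Fin n)) R :=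
  Matrix.fromBlocks
    (Matrix.fromBlocks 1 0 0 0) (Matrix.fromBlocks 0 0 0 1)
    (Matrix.fromBlocks 0 0 1 (-1)) (Matrix.fromBlocks 1 1 0 0)

open Equiv

theorem Equiv.Perm.apply_inv_self {α : Type*} (f : Perm α) (x : α) : f (f⁻¹ x) = x :=
  f.apply_symm_apply x

theorem Equiv.Perm.inv_apply_self {α : Type*} (f : Perm α) (x : α) : f⁻¹ (f x) = x :=
  f.symm_apply_apply x

namespace Stmt5

abbrev I2 (n : ℕ) := Fin n ⊕ Fin n

variable {n : ℕ} {F : Type*} [CommRing F]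

def sP (n : ℕ) : Equiv.Perm (I2 n) := Equiv.sumComm (Fin n) (Fin n)

@[simp] lemma sP_inl (i : Fin n) : sP n (Sum.inl i) = Sum.inr i := rfl
@[simp] lemma sP_inr (i : Fin n) : sP n (Sum.inr i) = Sum.inl i := rfl
@[simp] lemma sP_sP (x : I2 n) : sP n (sP n x) = x := by cases x <;> rfl
lemma sP_ne (x : I2 n) : sP n x ≠ x := by cases x <;> simp [sP]

def q2 : I2 n → Fin n := Sum.elim id id

@[simp] lemma q2_inl (i : Fin n) : q2 (Sum.inl i : I2 n) = i := rfl
@[simp] lemma q2_inr (i : Fin n) : q2 (Sum.inr i : I2 n) = i := rfl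
@[simp] lemma q2_sP (x : I2 n) : q2 (sP n x) = q2 x := by cases x <;> rfl

lemma eq_or_eq_sP (x : I2 n) : Sum.inl (q2 x) = x ∨ Sum.inl (q2 x) = sP n x := by
  cases x <;> simp

def Bf (v w : I2 n → F) : F :=
  ∑ i : Fin n, (v (Sum.inl i) * w (Sum.inr i) - v (Sum.inr i) * w (Sum.inl i))

lemma Bf_self (v : I2 n → F) : Bf v v = 0 := by
  simp [Bf, mul_comm]

lemma Bf_comm (v w : I2 n → F) : Bf w v = - Bf v w := by
  unfold Bf
  rw [← Finset.sum_neg_distrib]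
  exact Finset.sum_congr rfl fun i _ => by ring

def Hsub (n : ℕ) : Subgroup (Perm (I2 n)) where
  carrier := {τ | ∀ x, τ (sP n x) = sP n (τ x)}
  mul_mem' := by
    intro a b ha hb x
    simp only [Perm.mul_apply]
    rw [hb x, ha (b x)]
  one_mem' := fun x => rfl
  inv_mem' := by
    intro τ h x
    apply τ.injective
    rw [Perm.apply_inv_self]
    have := h (τ⁻¹ x)
    rw [Perm.apply_inv_self] at this
    rw [← this]

lemma mem_H_iff {τ : Perm (I2 n)} :
    τ ∈ Hsub n ↔ ∀ i : Fin n, τ (Sum.inr i) = sP n (τ (Sum.inl i)) := by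
  constructor
  · intro h i; exact h (Sum.inl i)
  · intro h x
    cases x with
    | inl i => exact h i
    | inr i => simp only [sP_inr]; rw [h i]; simp

lemma inv_mem_H {τ : Perm (I2 n)} (h : τ ∈ Hsub n) : τ⁻¹ ∈ Hsub n :=
  (Hsub n).inv_mem h

lemma q2_comm {τ : Perm (I2 n)} (hτ : τ ∈ Hsub n) (y : I2 n) :
    q2 (τ (Sum.inl (q2 y))) = q2 (τ y) := by
  rcases eq_or_eq_sP y with h | h
  · rw [h]
  · rw [h, hτ y, q2_sP]

def piOf (τ : Perm (I2 n)) (hτ : τ ∈ Hsub n) : Perm (Fin n) where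
  toFun i := q2 (τ (Sum.inl i))
  invFun i := q2 (τ⁻¹ (Sum.inl i))
  left_inv := by
    intro i
    have := q2_comm (inv_mem_H hτ) (τ (Sum.inl i))
    simp only [Perm.inv_apply_self] at this
    simpa using this
  right_inv := by
    intro i
    have := q2_comm hτ (τ⁻¹ (Sum.inl i))
    simp only [Perm.apply_inv_self] at this
    simpa using this

@[simp] lemma piOf_apply (τ : Perm (I2 n)) (hτ : τ ∈ Hsub n) (i : Fin n) :
    piOf τ hτ i = q2 (τ (Sum.inl i)) := rfl


def eT (T : Finset (Fin n)) : Perm (I2 n) where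
  toFun x := if q2 x ∈ T then sP n x else x
  invFun x := if q2 x ∈ T then sP n x else x
  left_inv := by
    intro x
    by_cases h : q2 x ∈ T <;> simp [h]
  right_inv := by
    intro x
    by_cases h : q2 x ∈ T <;> simp [h]

lemma eT_apply (T : Finset (Fin n)) (x : I2 n) :
    eT T x = if q2 x ∈ T then sP n x else x := rfl

lemma eT_empty : eT (∅ : Finset (Fin n)) = 1 := by
  ext x; simp [eT_apply, Perm.one_apply]

lemma eT_insert (a : Fin n) (T : Finset (Fin n)) (ha : a ∉ T) :
    eT (insert a T) = Equiv.swap (Sum.inl a : I2 n) (Sum.inr a) * eT T := by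
  ext x
  simp only [Perm.mul_apply, eT_apply, Finset.mem_insert]
  by_cases h1 : q2 x = a
  · have hT : q2 x ∉ T := h1 ▸ ha
    simp only [hT, if_neg hT, if_pos (Or.inl h1)]
    cases x with
    | inl i =>
      have : i = a := h1
      subst this
      simp [Equiv.swap_apply_left]
    | inr i =>
      have : i = a := h1
      subst this
      simp [Equiv.swap_apply_right]
  · by_cases h2 : q2 x ∈ T
    · simp only [if_pos h2, if_pos (Or.inr h2)]
      have hne1 : sP n x ≠ Sum.inl a := by
        intro hc; apply h1; rw [← q2_sP x, hc, q2_inl]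
      have hne2 : sP n x ≠ Sum.inr a := by
        intro hc; apply h1; rw [← q2_sP x, hc, q2_inr]
      rw [Equiv.swap_apply_of_ne_of_ne hne1 hne2]
    · have : ¬ (q2 x = a ∨ q2 x ∈ T) := by tauto
      simp only [if_neg h2, if_neg this]
      have hne1 : x ≠ Sum.inl a := fun hc => h1 (by rw [hc, q2_inl])
      have hne2 : x ≠ Sum.inr a := fun hc => h1 (by rw [hc, q2_inr])
      rw [Equiv.swap_apply_of_ne_of_ne hne1 hne2]

lemma sign_eT (T : Finset (Fin n)) : Perm.sign (eT T) = (-1) ^ T.card := by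
  induction T using Finset.induction_on with
  | empty => simp [eT_empty]
  | @insert a T ha ih =>
    rw [eT_insert a T ha, Perm.sign_mul, ih, Perm.sign_swap (by simp),
      Finset.card_insert_of_notMem ha, pow_succ]
    exact mul_comm _ _

lemma decomp (τ : Perm (I2 n)) (hτ : τ ∈ Hsub n) :
    ∃ (π : Perm (Fin n)) (T : Finset (Fin n)), τ = eT T * Equiv.sumCongr π π := by
  classical
  refine ⟨piOf τ hτ, Finset.univ.filter
    (fun j => τ (Sum.inl ((piOf τ hτ).symm j)) = Sum.inr j), ?_⟩
  set π := piOf τ hτ with hπ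
  ext x
  have key : ∀ i : Fin n, (τ (Sum.inl i) = Sum.inl (π i)) ∨ (τ (Sum.inl i) = Sum.inr (π i)) := by
    intro i
    rcases eq_or_eq_sP (τ (Sum.inl i)) with h | h
    · left; rw [← h]; rfl
    · right
      have : τ (Sum.inl i) = sP n (Sum.inl (q2 (τ (Sum.inl i)))) := by
        rw [h]; simp
      rw [this]; rfl
  have memT : ∀ i : Fin n,
      (π i ∈ Finset.univ.filter (fun j => τ (Sum.inl (π.symm j)) = Sum.inr j)) ↔
        τ (Sum.inl i) = Sum.inr (π i) := by
    intro i
    simp [Finset.mem_filter]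
  cases x with
  | inl i =>
    simp only [Perm.mul_apply, Equiv.sumCongr_apply, Sum.map_inl, eT_apply]
    rw [q2_inl]
    rcases key i with h | h
    · rw [if_neg, h]
      intro hc
      rw [(memT i).mp hc] at h
      exact absurd h (by simp)
    · rw [if_pos ((memT i).mpr h), h]; rfl
  | inr i =>
    have hr : τ (Sum.inr i) = sP n (τ (Sum.inl i)) := mem_H_iff.mp hτ i
    simp only [Perm.mul_apply, Equiv.sumCongr_apply, Sum.map_inr, eT_apply]
    rw [q2_inr]
    rcases key i with h | h
    · rw [if_neg, hr, h]
      · rfl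
      · intro hc
        rw [(memT i).mp hc] at h
        exact absurd h (by simp)
    · rw [if_pos ((memT i).mpr h), hr, h]

lemma keyA (τ : Perm (I2 n)) (hτ : τ ∈ Hsub n) (f : I2 n → F)
    (hf : ∀ x, f (sP n x) = - f x) :
    ((Perm.sign τ : ℤ) : F) * ∏ i : Fin n, f (τ (Sum.inl i)) = ∏ i : Fin n, f (Sum.inl i) := by
  classical
  obtain ⟨π, T, rfl⟩ := decomp τ hτ
  have hs2 : Perm.sign π * Perm.sign π = 1 := by
    rcases Int.units_eq_one_or (Perm.sign π) with h | h <;> rw [h] <;> rfl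
  have hsign : ((Perm.sign (eT T * Equiv.sumCongr π π) : ℤ) : F) = (-1) ^ T.card := by
    rw [Perm.sign_mul, sign_eT, Equiv.Perm.sign_sumCongr, hs2, mul_one]
    push_cast
    ring
  have h1 : ∀ i : Fin n, f ((eT T * Equiv.sumCongr π π) (Sum.inl i))
      = (if π i ∈ T then (-1 : F) else 1) * f (Sum.inl (π i)) := by
    intro i
    simp only [Perm.mul_apply, Equiv.sumCongr_apply, Sum.map_inl, eT_apply]
    rw [q2_inl]
    by_cases h : π i ∈ T
    · rw [if_pos h, if_pos h, sP_inl, ← sP_inl (π i), hf]; ring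
    · rw [if_neg h, if_neg h, one_mul]
  have hprod : ∏ i : Fin n, f ((eT T * Equiv.sumCongr π π) (Sum.inl i))
      = (-1 : F) ^ T.card * ∏ i : Fin n, f (Sum.inl i) := by
    rw [Finset.prod_congr rfl (fun i _ => h1 i), Finset.prod_mul_distrib]
    congr 1
    · rw [Equiv.prod_comp π (fun j => if j ∈ T then (-1 : F) else 1),
        Finset.prod_ite_mem, Finset.univ_inter, Finset.prod_const]
    · exact Equiv.prod_comp π (fun j => f (Sum.inl j))
  rw [hprod, hsign, ← mul_assoc, ← mul_pow]
  norm_num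

lemma Bf_add_left (u v w : I2 n → F) : Bf (u + v) w = Bf u w + Bf v w := by
  unfold Bf
  rw [← Finset.sum_add_distrib]
  exact Finset.sum_congr rfl fun i _ => by simp [Pi.add_apply]; ring

lemma Bf_add_right (u v w : I2 n → F) : Bf u (v + w) = Bf u v + Bf u w := by
  unfold Bf
  rw [← Finset.sum_add_distrib]
  exact Finset.sum_congr rfl fun i _ => by simp [Pi.add_apply]; ring

lemma Bf_smul_left (c : F) (v w : I2 n → F) : Bf (c • v) w = c * Bf v w := by
  unfold Bf
  rw [Finset.mul_sum]
  exact Finset.sum_congr rfl fun i _ => by simp [Pi.smul_apply, smul_eq_mul]; ring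

lemma Bf_smul_right (c : F) (v w : I2 n → F) : Bf v (c • w) = c * Bf v w := by
  unfold Bf
  rw [Finset.mul_sum]
  exact Finset.sum_congr rfl fun i _ => by simp [Pi.smul_apply, smul_eq_mul]; ring

def pterm (v : I2 n → I2 n → F) (σ : Perm (I2 n)) : F :=
  ((Perm.sign σ : ℤ) : F) * ∏ i : Fin n, Bf (v (σ (Sum.inl i))) (v (σ (Sum.inr i)))

lemma pterm_mul_mem (v : I2 n → I2 n → F) (σ : Perm (I2 n)) {τ : Perm (I2 n)}
    (hτ : τ ∈ Hsub n) : pterm v (σ * τ) = pterm v σ := by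
  set f : I2 n → F := fun x => Bf (v (σ x)) (v (σ (sP n x))) with hfdef
  have hf : ∀ x, f (sP n x) = - f x := by
    intro x
    simp only [hfdef, sP_sP]
    exact Bf_comm _ _
  have h2 : ∀ i : Fin n,
      Bf (v ((σ * τ) (Sum.inl i))) (v ((σ * τ) (Sum.inr i))) = f (τ (Sum.inl i)) := by
    intro i
    have hri : τ (Sum.inr i) = sP n (τ (Sum.inl i)) := mem_H_iff.mp hτ i
    simp only [Perm.mul_apply, hfdef, hri]
  calc pterm v (σ * τ)
      = ((Perm.sign σ : ℤ) : F) *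
        (((Perm.sign τ : ℤ) : F) * ∏ i : Fin n, f (τ (Sum.inl i))) := by
        rw [pterm, Perm.sign_mul, Finset.prod_congr rfl fun i _ => h2 i]
        push_cast
        ring
    _ = ((Perm.sign σ : ℤ) : F) * ∏ i : Fin n, f (Sum.inl i) := by rw [keyA τ hτ f hf]
    _ = pterm v σ := by
        rw [pterm]
        congr 1

abbrev QH (n : ℕ) := Perm (I2 n) ⧸ Hsub n

noncomputable instance : Fintype (QH n) := Fintype.ofFinite _

def ptermQ (v : I2 n → I2 n → F) : QH n → F :=
  Quotient.lift (pterm v) (by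
    intro a b hab
    have h : a⁻¹ * b ∈ Hsub n := QuotientGroup.leftRel_apply.mp hab
    have : b = a * (a⁻¹ * b) := by group
    rw [this, pterm_mul_mem v a h])

@[simp] lemma ptermQ_mk (v : I2 n → I2 n → F) (σ : Perm (I2 n)) :
    ptermQ v (QuotientGroup.mk σ) = pterm v σ := rfl

noncomputable def Fsum (v : I2 n → I2 n → F) : F := ∑ c : QH n, ptermQ v c

section Update
set_option linter.unusedSectionVars false
variable [DecidableEq (I2 n)]

lemma pterm_factor_split (v : I2 n → I2 n → F) (σ : Perm (I2 n)) (i₀ : Fin n) :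
    ∏ i : Fin n, Bf (v (σ (Sum.inl i))) (v (σ (Sum.inr i)))
      = Bf (v (σ (Sum.inl i₀))) (v (σ (Sum.inr i₀))) *
        ∏ i ∈ Finset.univ.erase i₀, Bf (v (σ (Sum.inl i))) (v (σ (Sum.inr i))) :=
  (Finset.mul_prod_erase Finset.univ _ (Finset.mem_univ i₀)).symm

lemma not_hit {σ : Perm (I2 n)} {a : I2 n} {i : Fin n} (h : i ≠ q2 (σ⁻¹ a)) :
    σ (Sum.inl i) ≠ a ∧ σ (Sum.inr i) ≠ a := by
  constructor
  · intro hc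
    apply h
    rw [← hc, Perm.inv_apply_self, q2_inl]
  · intro hc
    apply h
    rw [← hc, Perm.inv_apply_self, q2_inr]

lemma inv_cases (σ : Perm (I2 n)) (a : I2 n) :
    σ⁻¹ a = Sum.inl (q2 (σ⁻¹ a)) ∨ σ⁻¹ a = Sum.inr (q2 (σ⁻¹ a)) := by
  rcases eq_or_eq_sP (σ⁻¹ a) with h | h
  · left; exact h.symm
  · right
    have := congrArg (sP n) h
    rw [sP_sP] at this
    conv_lhs => rw [← this]
    rfl

lemma pterm_update_add (v : I2 n → I2 n → F) (a : I2 n) (x y : I2 n → F) (σ : Perm (I2 n)) :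
    pterm (Function.update v a (x + y)) σ
      = pterm (Function.update v a x) σ + pterm (Function.update v a y) σ := by
  set i₀ := q2 (σ⁻¹ a) with hi₀
  have herase : ∀ z : I2 n → F, ∀ i ∈ Finset.univ.erase i₀,
      Bf (Function.update v a z (σ (Sum.inl i))) (Function.update v a z (σ (Sum.inr i)))
        = Bf (v (σ (Sum.inl i))) (v (σ (Sum.inr i))) := by
    intro z i hi
    obtain ⟨h1, h2⟩ := not_hit (Finset.mem_erase.mp hi).1
    rw [Function.update_of_ne h1, Function.update_of_ne h2]
  have hupd : ∀ z : I2 n → F, Function.update v a z a = z := fun z => Function.update_self a z v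
  rcases inv_cases σ a with hc | hc
  · have ha1 : σ (Sum.inl i₀) = a := by rw [← hi₀] at hc; rw [← hc, Perm.apply_inv_self]
    have ha2 : σ (Sum.inr i₀) ≠ a := by
      intro h
      have : Sum.inr i₀ = σ⁻¹ a := by rw [← h, Perm.inv_apply_self]
      rw [← this] at hc
      exact absurd hc (by simp)
    simp only [pterm, pterm_factor_split _ σ i₀]
    rw [Finset.prod_congr rfl (herase (x + y)), Finset.prod_congr rfl (herase x),
      Finset.prod_congr rfl (herase y), ha1, hupd, hupd, hupd,
      Function.update_of_ne ha2, Function.update_of_ne ha2, Function.update_of_ne ha2,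
      Bf_add_left]
    ring
  · have ha1 : σ (Sum.inr i₀) = a := by rw [← hi₀] at hc; rw [← hc, Perm.apply_inv_self]
    have ha2 : σ (Sum.inl i₀) ≠ a := by
      intro h
      have : Sum.inl i₀ = σ⁻¹ a := by rw [← h, Perm.inv_apply_self]
      rw [← this] at hc
      exact absurd hc (by simp)
    simp only [pterm, pterm_factor_split _ σ i₀]
    rw [Finset.prod_congr rfl (herase (x + y)), Finset.prod_congr rfl (herase x),
      Finset.prod_congr rfl (herase y), ha1, hupd, hupd, hupd,
      Function.update_of_ne ha2, Function.update_of_ne ha2, Function.update_of_ne ha2,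
      Bf_add_right]
    ring

lemma pterm_update_smul (v : I2 n → I2 n → F) (a : I2 n) (c : F) (x : I2 n → F)
    (σ : Perm (I2 n)) :
    pterm (Function.update v a (c • x)) σ = c * pterm (Function.update v a x) σ := by
  set i₀ := q2 (σ⁻¹ a) with hi₀
  have herase : ∀ z : I2 n → F, ∀ i ∈ Finset.univ.erase i₀,
      Bf (Function.update v a z (σ (Sum.inl i))) (Function.update v a z (σ (Sum.inr i)))
        = Bf (v (σ (Sum.inl i))) (v (σ (Sum.inr i))) := by
    intro z i hi
    obtain ⟨h1, h2⟩ := not_hit (Finset.mem_erase.mp hi).1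
    rw [Function.update_of_ne h1, Function.update_of_ne h2]
  have hupd : ∀ z : I2 n → F, Function.update v a z a = z := fun z => Function.update_self a z v
  rcases inv_cases σ a with hc | hc
  · have ha1 : σ (Sum.inl i₀) = a := by rw [← hi₀] at hc; rw [← hc, Perm.apply_inv_self]
    have ha2 : σ (Sum.inr i₀) ≠ a := by
      intro h
      have : Sum.inr i₀ = σ⁻¹ a := by rw [← h, Perm.inv_apply_self]
      rw [← this] at hc
      exact absurd hc (by simp)
    simp only [pterm, pterm_factor_split _ σ i₀]
    rw [Finset.prod_congr rfl (herase (c • x)), Finset.prod_congr rfl (herase x),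
      ha1, hupd, hupd, Function.update_of_ne ha2, Function.update_of_ne ha2, Bf_smul_left]
    ring
  · have ha1 : σ (Sum.inr i₀) = a := by rw [← hi₀] at hc; rw [← hc, Perm.apply_inv_self]
    have ha2 : σ (Sum.inl i₀) ≠ a := by
      intro h
      have : Sum.inl i₀ = σ⁻¹ a := by rw [← h, Perm.inv_apply_self]
      rw [← this] at hc
      exact absurd hc (by simp)
    simp only [pterm, pterm_factor_split _ σ i₀]
    rw [Finset.prod_congr rfl (herase (c • x)), Finset.prod_congr rfl (herase x),
      ha1, hupd, hupd, Function.update_of_ne ha2, Function.update_of_ne ha2, Bf_smul_right]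
    ring

end Update

lemma swap_mem_H {x y : I2 n} (hxy : x ≠ y) (h : Equiv.swap x y ∈ Hsub n) :
    y = sP n x := by
  classical
  have hx := h x
  rw [Equiv.swap_apply_left] at hx
  by_cases h1 : sP n x = y
  · exact h1.symm
  · have h0 : sP n x ≠ x := sP_ne x
    rw [Equiv.swap_apply_of_ne_of_ne h0 h1] at hx
    exact absurd ((sP n).injective hx) hxy

lemma Fsum_alternating (v : I2 n → I2 n → F) (a b : I2 n) (hv : v a = v b) (hab : a ≠ b) :
    Fsum v = 0 := by
  classical
  have hvw : ∀ z : I2 n, v (Equiv.swap a b z) = v z := by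
    intro z
    rcases eq_or_ne z a with rfl | hza
    · rw [Equiv.swap_apply_left, hv]
    rcases eq_or_ne z b with rfl | hzb
    · rw [Equiv.swap_apply_right, hv]
    · rw [Equiv.swap_apply_of_ne_of_ne hza hzb]
  have hresp : (Relator.LiftFun ⇑(QuotientGroup.leftRel (Hsub n)) ⇑(QuotientGroup.leftRel (Hsub n)))
      (fun σ => Equiv.swap a b * σ) (fun σ => Equiv.swap a b * σ) := by
    intro s t hst
    rw [QuotientGroup.leftRel_apply] at hst ⊢
    simpa [mul_assoc] using hst
  set gmap : QH n → QH n := Quotient.map' (fun σ => Equiv.swap a b * σ) hresp with hgmap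
  have hneg : ∀ σ : Perm (I2 n), pterm v (Equiv.swap a b * σ) = - pterm v σ := by
    intro σ
    rw [pterm, pterm, Perm.sign_mul, Perm.sign_swap hab]
    have hprod : ∀ i : Fin n,
        Bf (v ((Equiv.swap a b * σ) (Sum.inl i))) (v ((Equiv.swap a b * σ) (Sum.inr i)))
          = Bf (v (σ (Sum.inl i))) (v (σ (Sum.inr i))) := by
      intro i
      simp only [Perm.mul_apply, hvw]
    rw [Finset.prod_congr rfl fun i _ => hprod i]
    push_cast
    ring
  have hzero : ∀ σ : Perm (I2 n), gmap (QuotientGroup.mk σ) = QuotientGroup.mk σ →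
      pterm v σ = 0 := by
    intro σ hfix
    have : (QuotientGroup.mk (Equiv.swap a b * σ) : QH n) = QuotientGroup.mk σ := hfix
    rw [QuotientGroup.eq] at this
    have hmem : Equiv.swap (σ⁻¹ a) (σ⁻¹ b) ∈ Hsub n := by
      have hconj : σ⁻¹ * (Equiv.swap a b) * σ = Equiv.swap (σ⁻¹ a) (σ⁻¹ b) := by
        rw [Equiv.swap_apply_apply]; group
      rw [_root_.mul_inv_rev, Equiv.swap_inv] at this
      rwa [hconj] at this
    have hne : σ⁻¹ a ≠ σ⁻¹ b := fun hc => hab (σ⁻¹.injective hc)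
    have hsb : σ⁻¹ b = sP n (σ⁻¹ a) := swap_mem_H hne hmem
    set i₀ := q2 (σ⁻¹ a) with hi₀
    have hfac : Bf (v (σ (Sum.inl i₀))) (v (σ (Sum.inr i₀))) = 0 := by
      rcases inv_cases σ a with hc | hc
      · have h1 : σ (Sum.inl i₀) = a := by rw [← hi₀] at hc; rw [← hc, Perm.apply_inv_self]
        have h2 : σ (Sum.inr i₀) = b := by
          have : σ⁻¹ b = Sum.inr i₀ := by rw [hsb, hc, sP_inl, hi₀]
          rw [← this, Perm.apply_inv_self]
        rw [h1, h2, hv, Bf_self]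
      · have h1 : σ (Sum.inr i₀) = a := by rw [← hi₀] at hc; rw [← hc, Perm.apply_inv_self]
        have h2 : σ (Sum.inl i₀) = b := by
          have : σ⁻¹ b = Sum.inl i₀ := by rw [hsb, hc, sP_inr, hi₀]
          rw [← this, Perm.apply_inv_self]
        rw [h1, h2, ← hv, Bf_self]
    rw [pterm, Finset.prod_eq_zero (Finset.mem_univ i₀) hfac, mul_zero]
  rw [Fsum]
  refine Finset.sum_involution (fun c _ => gmap c) ?_ ?_ (fun c hc => Finset.mem_univ _) ?_
  · intro c _
    induction c using Quotient.ind with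
    | _ σ =>
      show ptermQ v (QuotientGroup.mk σ) + ptermQ v (gmap (QuotientGroup.mk σ)) = 0
      have hg1 : gmap (QuotientGroup.mk σ) = QuotientGroup.mk (Equiv.swap a b * σ) := rfl
      rw [hg1, ptermQ_mk, ptermQ_mk, hneg σ, add_neg_cancel]
  · intro c _ hne hfix
    induction c using Quotient.ind with
    | _ σ =>
      exact hne (hzero σ hfix)
  · intro c _
    induction c using Quotient.ind with
    | _ σ =>
      show gmap (gmap (QuotientGroup.mk σ)) = QuotientGroup.mk σ
      have h2 : gmap (gmap (QuotientGroup.mk σ))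
          = QuotientGroup.mk (Equiv.swap a b * (Equiv.swap a b * σ)) := rfl
      rw [h2, ← mul_assoc, Equiv.swap_mul_self, one_mul]

noncomputable def pfA : (I2 n → F) [⋀^(I2 n)]→ₗ[F] F where
  toFun := Fsum
  map_update_add' := by
    intro _ v a x y
    have h : ∀ c : QH n, ptermQ (Function.update v a (x + y)) c
        = ptermQ (Function.update v a x) c + ptermQ (Function.update v a y) c := by
      intro c
      induction c using Quotient.ind with
      | _ σ =>
        rw [ptermQ_mk, ptermQ_mk, ptermQ_mk]
        exact pterm_update_add v a x y σ
    rw [Fsum, Fsum, Fsum, Finset.sum_congr rfl fun c _ => h c, Finset.sum_add_distrib]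
  map_update_smul' := by
    intro _ v a c x
    have h : ∀ cc : QH n, ptermQ (Function.update v a (c • x)) cc
        = c * ptermQ (Function.update v a x) cc := by
      intro cc
      induction cc using Quotient.ind with
      | _ σ =>
        rw [ptermQ_mk, ptermQ_mk]
        exact pterm_update_smul v a c x σ
    rw [Fsum, Fsum, Finset.sum_congr rfl fun cc _ => h cc, ← Finset.mul_sum]
    rfl
  map_eq_zero_of_eq' := by
    intro v a b hv hab
    exact Fsum_alternating v a b hv hab

@[simp] lemma pfA_apply (v : I2 n → I2 n → F) : pfA v = Fsum v := rfl

def v0 (n : ℕ) (F : Type*) [CommRing F] : I2 n → I2 n → F :=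
  fun a b => if a = b then 1 else 0

lemma Bf_v0 (x y : I2 n) : Bf (v0 n F x) (v0 n F y) = Jmat (Fin n) F x y := by
  classical
  cases x with
  | inl i =>
    cases y with
    | inl j =>
      simp [Bf, v0, Jmat, Matrix.fromBlocks_apply₁₁]
    | inr j =>
      simp [Bf, v0, Jmat, Matrix.fromBlocks_apply₁₂, Matrix.one_apply, Finset.sum_ite_eq']
  | inr i =>
    cases y with
    | inl j =>
      simp [Bf, v0, Jmat, Matrix.fromBlocks_apply₂₁, Matrix.one_apply, Finset.sum_ite_eq']
    | inr j =>
      simp [Bf, v0, Jmat, Matrix.fromBlocks_apply₂₂]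

lemma Jmat_eq_zero_of_ne {x y : I2 n} (h : y ≠ sP n x) : Jmat (Fin n) F x y = 0 := by
  cases x with
  | inl i =>
    cases y with
    | inl j => simp [Jmat]
    | inr j =>
      have : i ≠ j := fun hc => h (by rw [hc]; rfl)
      simp [Jmat, Matrix.one_apply, this]
  | inr i =>
    cases y with
    | inl j =>
      have : i ≠ j := fun hc => h (by rw [hc]; rfl)
      simp [Jmat, Matrix.one_apply, this]
    | inr j => simp [Jmat]

lemma Fsum_v0 : Fsum (v0 n F) = 1 := by
  classical
  have h : ∀ c : QH n, ptermQ (v0 n F) c = if c = QuotientGroup.mk 1 then 1 else 0 := by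
    intro c
    induction c using Quotient.ind with
    | _ σ =>
      rw [ptermQ_mk]
      by_cases hσ : σ ∈ Hsub n
      · have hc1 : (QuotientGroup.mk σ : QH n) = QuotientGroup.mk 1 := by
          rw [QuotientGroup.eq]
          simpa using (Hsub n).inv_mem hσ
        rw [if_pos hc1]
        have : pterm (v0 n F) σ = pterm (v0 n F) (1 * σ) := by rw [one_mul]
        rw [this, pterm_mul_mem (v0 n F) 1 hσ, pterm]
        have h1 : ∀ i : Fin n, Bf (v0 n F ((1 : Perm (I2 n)) (Sum.inl i)))
            (v0 n F ((1 : Perm (I2 n)) (Sum.inr i))) = 1 := by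
          intro i
          rw [Perm.one_apply, Perm.one_apply, Bf_v0]
          simp [Jmat, Matrix.one_apply]
        rw [Finset.prod_congr rfl fun i _ => h1 i]
        simp
      · have hc1 : (QuotientGroup.mk σ : QH n) ≠ QuotientGroup.mk 1 := by
          intro hc
          rw [QuotientGroup.eq] at hc
          apply hσ
          simpa using (Hsub n).inv_mem hc
        rw [if_neg hc1]
        obtain ⟨i, hi⟩ : ∃ i : Fin n, σ (Sum.inr i) ≠ sP n (σ (Sum.inl i)) := by
          by_contra hcon
          push_neg at hcon
          exact hσ (mem_H_iff.mpr hcon)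
        have hfac : Bf (v0 n F (σ (Sum.inl i))) (v0 n F (σ (Sum.inr i))) = 0 := by
          rw [Bf_v0]
          exact Jmat_eq_zero_of_ne hi
        rw [pterm, Finset.prod_eq_zero (Finset.mem_univ i) hfac, mul_zero]
  rw [Fsum, Finset.sum_congr rfl fun c _ => h c, Finset.sum_ite_eq' Finset.univ]
  simp

lemma Bf_cols (g : Matrix (I2 n) (I2 n) F) (a b : I2 n) :
    Bf (fun i => g i a) (fun i => g i b) = (gᵀ * Jmat (Fin n) F * g) a b := by
  classical
  have hL : ∀ j : Fin n, (gᵀ * Jmat (Fin n) F) a (Sum.inl j) = - g (Sum.inr j) a := by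
    intro j
    rw [Matrix.mul_apply, Fintype.sum_sum_type]
    simp [Jmat, Matrix.one_apply, Matrix.transpose_apply, mul_ite, Finset.sum_ite_eq']
  have hR : ∀ j : Fin n, (gᵀ * Jmat (Fin n) F) a (Sum.inr j) = g (Sum.inl j) a := by
    intro j
    rw [Matrix.mul_apply, Fintype.sum_sum_type]
    simp [Jmat, Matrix.one_apply, Matrix.transpose_apply, mul_ite, Finset.sum_ite_eq']
  rw [Matrix.mul_apply, Fintype.sum_sum_type]
  simp only [hL, hR]
  rw [Bf, Finset.sum_sub_distrib, sub_eq_neg_add, ← Finset.sum_neg_distrib]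
  simp [neg_mul]

theorem det_symplectic_similitude (g : Matrix (I2 n) (I2 n) F) (μ : F)
    (hg : gᵀ * Jmat (Fin n) F * g = μ • Jmat (Fin n) F) : g.det = μ ^ n := by
  classical
  set e := Pi.basisFun F (I2 n) with he
  set cols : I2 n → (I2 n → F) := fun a i => g i a with hcols
  have hbe : ⇑e = v0 n F := by
    funext a b
    simp [he, Pi.basisFun_apply, Pi.single_apply, v0, eq_comm]
  have h1 := AlternatingMap.eq_smul_basis_det e (pfA (n := n) (F := F))
  have h2 : pfA cols = pfA ⇑e * e.det cols := by
    conv_lhs => rw [h1]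
    rw [AlternatingMap.smul_apply, smul_eq_mul]
  have hv0 : pfA ⇑e = 1 := by
    rw [pfA_apply, hbe, Fsum_v0]
  have hdet : e.det cols = g.det := by
    rw [Module.Basis.det_apply]
    have hm : e.toMatrix cols = g := by
      ext i j
      rw [Module.Basis.toMatrix_apply, Pi.basisFun_repr]
    rw [hm]
  have hμn : pfA cols = μ ^ n := by
    rw [pfA_apply, Fsum]
    have h : ∀ c : QH n, ptermQ cols c = μ ^ n * ptermQ (v0 n F) c := by
      intro c
      induction c using Quotient.ind with
      | _ σ =>
        rw [ptermQ_mk, ptermQ_mk, pterm, pterm]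
        have hfac : ∀ i : Fin n, Bf (cols (σ (Sum.inl i))) (cols (σ (Sum.inr i)))
            = μ * Bf (v0 n F (σ (Sum.inl i))) (v0 n F (σ (Sum.inr i))) := by
          intro i
          rw [Bf_v0]
          have : Bf (cols (σ (Sum.inl i))) (cols (σ (Sum.inr i)))
              = (gᵀ * Jmat (Fin n) F * g) (σ (Sum.inl i)) (σ (Sum.inr i)) :=
            Bf_cols g _ _
          rw [this, hg, Matrix.smul_apply, smul_eq_mul]
        rw [Finset.prod_congr rfl fun i _ => hfac i, Finset.prod_mul_distrib,
          Finset.prod_const, Finset.card_univ, Fintype.card_fin]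
        ring
    rw [Finset.sum_congr rfl fun c _ => h c, ← Finset.mul_sum]
    have : ∑ c : QH n, ptermQ (v0 n F) c = 1 := Fsum_v0
    rw [this, mul_one]
  have hfin : pfA cols = g.det := by rw [h2, hv0, one_mul, hdet]
  rw [← hfin]
  exact hμn

def Qinv (n : ℕ) (R : Type*) [CommRing R] :
    Matrix ((Fin n ⊕ Fin n) ⊕ (Fin n ⊕ Fin n)) ((Fin n ⊕ Fin n) ⊕ (Fin n ⊕ Fin n)) R :=
  Matrix.fromBlocks
    (Matrix.fromBlocks 1 0 1 0) (Matrix.fromBlocks 0 0 0 (-1))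
    (Matrix.fromBlocks 0 (-1) 0 1) (Matrix.fromBlocks 1 0 0 0)

lemma Qmat_mul_Qinv : Qmat n F * Qinv n F = 1 := by
  rw [Qmat, Qinv, Matrix.fromBlocks_multiply]
  simp only [Matrix.fromBlocks_multiply, Matrix.fromBlocks_add, Matrix.mul_one, Matrix.one_mul,
    Matrix.mul_zero, Matrix.zero_mul, Matrix.mul_neg, Matrix.neg_mul, add_zero, zero_add,
    Matrix.mul_one, neg_zero, neg_neg]
  rw [← Matrix.fromBlocks_one, ← Matrix.fromBlocks_one, Matrix.fromBlocks_inj]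
  refine ⟨rfl, ?_, ?_, rfl⟩ <;> simp

lemma Qmat_inv : (Qmat n F)⁻¹ = Qinv n F :=
  Matrix.inv_eq_right_inv Qmat_mul_Qinv

lemma X_blocks (g : Matrix (I2 n) (I2 n) F) :
    Qmat n F * iota g g * Qinv n F =
      Matrix.fromBlocks
        (Matrix.fromBlocks g.toBlocks₁₁ g.toBlocks₁₂ g.toBlocks₂₁ g.toBlocks₂₂)
        (Matrix.fromBlocks (-g.toBlocks₁₂) 0 0 (-g.toBlocks₂₁))
        0
        (Matrix.fromBlocks g.toBlocks₂₂ (-g.toBlocks₂₁) (-g.toBlocks₁₂) g.toBlocks₁₁) := by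
  rw [Qmat, iota, Qinv]
  rw [Matrix.fromBlocks_multiply, Matrix.fromBlocks_multiply]
  simp only [Matrix.fromBlocks_multiply, Matrix.fromBlocks_add, Matrix.mul_one, Matrix.one_mul,
    Matrix.mul_zero, Matrix.zero_mul, Matrix.mul_neg, Matrix.neg_mul, add_zero, zero_add,
    neg_zero, neg_neg]
  rw [Matrix.fromBlocks_inj]
  refine ⟨?_, ?_, ?_, ?_⟩ <;>
    first
      | (rw [Matrix.fromBlocks_inj]; refine ⟨?_, ?_, ?_, ?_⟩ <;> simp)
      | (ext i j; simp [Matrix.fromBlocks]; cases i <;> cases j <;> simp)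
end Stmt5

/-- Lemma 2.2 iii) of the paper: for `g ∈ GSp₂ₙ` with multiplier `μ`, the matrix
`X = Qₙ ι(g,g) Qₙ⁻¹` lies in the Siegel parabolic `P₄ₙ` (lower-left `2n × 2n` block zero)
and satisfies `d(X) = μ^{-n} det(A) = 1`, where `A` is the upper-left `2n × 2n` block. -/
theorem stmt_5 (n : ℕ) (F : Type*) [Field F]
    (g : Matrix (Fin n ⊕ Fin n) (Fin n ⊕ Fin n) F) (μ : F) (hμ : μ ≠ 0)
    (hg : gᵀ * Jmat (Fin n) F * g = μ • Jmat (Fin n) F) :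
    (Qmat n F * iota g g * (Qmat n F)⁻¹).toBlocks₂₁ = 0 ∧
      (μ ^ n)⁻¹ * ((Qmat n F * iota g g * (Qmat n F)⁻¹).toBlocks₁₁).det = 1 := by
  have hinv : (Qmat n F)⁻¹ = Stmt5.Qinv n F := Stmt5.Qmat_inv
  constructor
  · rw [hinv, Stmt5.X_blocks, Matrix.toBlocks_fromBlocks₂₁]
  · rw [hinv, Stmt5.X_blocks, Matrix.toBlocks_fromBlocks₁₁, Matrix.fromBlocks_toBlocks]
    rw [Stmt5.det_symplectic_similitude g μ hg]
    exact inv_mul_cancel₀ (pow_ne_zero n hμ)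
end

section
/- Let $V$ be an upper triangular nilpotent real $n \times n$ matrix, let $\theta_1,\ldots,\theta_n$ be real numbers, and set $C = \mathrm{diag}(\cos\theta_1,\ldots,\cos\theta_n)$, $S = \mathrm{diag}(\sin\theta_1,\ldots,\sin\theta_n)$. Assume $I_n + SVS$ is invertible, and let $U = I_n + V$, $Z = -(I_n + SVS)^{-1} S V C$. Then there exists $p = \begin{pmatrix} B & * \\ 0 & {}^t B^{-1}\end{pmatrix} \in \mathrm{Sp}_{4n}(\mathbb{R})$ with $\det(B) = 1$ such that $\begin{pmatrix} C & 0 & 0 & S \\ 0 & C & S & 0 \\ 0 & -S & C & 0 \\ -S & 0 & 0 & C \end{pmatrix}\begin{pmatrix} U & & & \\ & I_n & & \\ & & {}^t U^{-1} & \\ & & & I_n\end{pmatrix} = p\,\begin{pmatrix} I_n & & & \\ & I_n & & \\ & {}^t Z & I_n & \\ Z & & & I_n\end{pmatrix}\begin{pmatrix} C & 0 & 0 & S \\ 0 & C & S & 0 \\ 0 & -S & C & 0 \\ -S & 0 & 0 & C \end{pmatrix}$. -/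
open Matrix

lemma core_ring {R : Type*} [Ring R] (C S Y T : R)
    (hcs : C*S = S*C) (hone : S*S + C*C = 1) (hY : Y*(1+T) = 1) :
    (-(S*C) + C*Y*S) * (1 + S*T*S) = (S*S + C*Y*C) * (-(C*T*S)) := by
  have main : (-(S*C) + C*Y*S) * (1 + S*T*S) - (S*S + C*Y*C) * (-(C*T*S))
      = C*Y*((S*S + C*C) - 1)*(T*S) + (S*(S*C - C*S))*(T*S)
        + (C*(Y*(1+T))*S - C*S) + (C*S - S*C) := by
    noncomm_ring
  have h2 : C*Y*((S*S + C*C) - 1)*(T*S) + (S*(S*C - C*S))*(T*S)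
        + (C*(Y*(1+T))*S - C*S) + (C*S - S*C) = 0 := by
    rw [hone, hY]
    simp only [sub_self, mul_zero, zero_mul, mul_one, add_zero, zero_add]
    rw [hcs]
    simp
  exact sub_eq_zero.mp (main.trans h2)

lemma tri_inv_facts {n : ℕ} (U : Matrix (Fin n) (Fin n) ℝ)
    (htri : U.BlockTriangular id) (hdiag : ∀ i, U i i = 1) :
    U.det = 1 ∧ U⁻¹.BlockTriangular id ∧ ∀ i, U⁻¹ i i = 1 := by
  have hdet : U.det = 1 := by
    rw [Matrix.det_of_upperTriangular htri]
    simp [hdiag]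
  have hu : IsUnit U.det := by rw [hdet]; exact isUnit_one
  have : Invertible U := U.invertibleOfIsUnitDet hu
  have htri' : U⁻¹.BlockTriangular id := Matrix.blockTriangular_inv_of_blockTriangular htri
  refine ⟨hdet, htri', fun i => ?_⟩
  have h1 : (U⁻¹ * U) i i = 1 := by rw [Matrix.nonsing_inv_mul U hu]; simp [Matrix.one_apply]
  rw [Matrix.mul_apply, Finset.sum_eq_single i] at h1
  · rw [hdiag i, mul_one] at h1; exact h1
  · intro k _ hk
    rcases lt_or_gt_of_ne hk with h | h
    · rw [htri' (show (id k : Fin n) < id i from h), zero_mul]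
    · rw [htri (show (id i : Fin n) < id k from h), mul_zero]
  · intro h; exact absurd (Finset.mem_univ i) h


lemma rotJ {ι : Type*} [Fintype ι] [DecidableEq ι] (A B : Matrix ι ι ℝ)
    (hAB : A*B = B*A) (hone : A*A + B*B = 1) :
    (Matrix.fromBlocks A B (-B) A) * (Matrix.fromBlocks 0 1 (-1) 0) *
      (Matrix.fromBlocks A (-B) B A) = Matrix.fromBlocks 0 1 (-1) 0 := by
  rw [Matrix.fromBlocks_multiply, Matrix.fromBlocks_multiply]
  refine Matrix.fromBlocks_inj.mpr ⟨?_, ?_, ?_, ?_⟩ <;>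
    simp only [mul_zero, zero_mul, mul_one, one_mul, mul_neg, neg_mul, neg_neg,
      add_zero, zero_add, neg_zero]
  · rw [hAB]; simp
  · rw [add_comm]; exact hone
  · rw [← neg_add, hone]
  · rw [hAB]; simp

/-- The matrix identity (Blambdanlemma1eq12) of the paper: the rotation-type block matrix
times `diag(U, 1, ᵗU⁻¹, 1)` equals a Siegel-parabolic element `p = [[B,*],[0,ᵗB⁻¹]]` with
`det B = 1` times the unipotent matrix built from `Z = -(1+SVS)⁻¹SVC` times the rotation
matrix. -/
theorem stmt_11 (n : ℕ) (V : Matrix (Fin n) (Fin n) ℝ)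
    (hV : ∀ i j : Fin n, j ≤ i → V i j = 0)
    (θ : Fin n → ℝ)
    (hinv : IsUnit (1 + Matrix.diagonal (fun j => Real.sin (θ j)) * V *
      Matrix.diagonal (fun j => Real.sin (θ j)))) :
    ∃ Bm Em : Matrix (Fin n ⊕ Fin n) (Fin n ⊕ Fin n) ℝ,
      Bm.det = 1 ∧
      (Matrix.fromBlocks Bm Em 0 (Bm⁻¹)ᵀ)ᵀ * Jmat (Fin n ⊕ Fin n) ℝ *
          Matrix.fromBlocks Bm Em 0 (Bm⁻¹)ᵀ = Jmat (Fin n ⊕ Fin n) ℝ ∧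
      (Matrix.fromBlocks
          (Matrix.fromBlocks (Matrix.diagonal fun j => Real.cos (θ j)) 0 0
            (Matrix.diagonal fun j => Real.cos (θ j)))
          (Matrix.fromBlocks 0 (Matrix.diagonal fun j => Real.sin (θ j))
            (Matrix.diagonal fun j => Real.sin (θ j)) 0)
          (Matrix.fromBlocks 0 (-Matrix.diagonal fun j => Real.sin (θ j))
            (-Matrix.diagonal fun j => Real.sin (θ j)) 0)
          (Matrix.fromBlocks (Matrix.diagonal fun j => Real.cos (θ j)) 0 0
            (Matrix.diagonal fun j => Real.cos (θ j)))) *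
        (Matrix.fromBlocks (Matrix.fromBlocks (1 + V) 0 0 1) 0 0
          (Matrix.fromBlocks (((1 + V)⁻¹)ᵀ) 0 0 1))
      = Matrix.fromBlocks Bm Em 0 (Bm⁻¹)ᵀ *
          (Matrix.fromBlocks 1 0
            (Matrix.fromBlocks 0
              ((-((1 + Matrix.diagonal (fun j => Real.sin (θ j)) * V *
                    Matrix.diagonal (fun j => Real.sin (θ j)))⁻¹ *
                  (Matrix.diagonal (fun j => Real.sin (θ j)) * V *
                    Matrix.diagonal (fun j => Real.cos (θ j)))))ᵀ)
              (-((1 + Matrix.diagonal (fun j => Real.sin (θ j)) * V *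
                    Matrix.diagonal (fun j => Real.sin (θ j)))⁻¹ *
                  (Matrix.diagonal (fun j => Real.sin (θ j)) * V *
                    Matrix.diagonal (fun j => Real.cos (θ j)))))
              0)
            1) *
          (Matrix.fromBlocks
            (Matrix.fromBlocks (Matrix.diagonal fun j => Real.cos (θ j)) 0 0
              (Matrix.diagonal fun j => Real.cos (θ j)))
            (Matrix.fromBlocks 0 (Matrix.diagonal fun j => Real.sin (θ j))
              (Matrix.diagonal fun j => Real.sin (θ j)) 0)
            (Matrix.fromBlocks 0 (-Matrix.diagonal fun j => Real.sin (θ j))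
              (-Matrix.diagonal fun j => Real.sin (θ j)) 0)
            (Matrix.fromBlocks (Matrix.diagonal fun j => Real.cos (θ j)) 0 0
              (Matrix.diagonal fun j => Real.cos (θ j)))) := by
  classical
  set C := Matrix.diagonal (fun j => Real.cos (θ j)) with hCdef
  set S := Matrix.diagonal (fun j => Real.sin (θ j)) with hSdef
  set U := 1 + V with hUdef
  set h1 := 1 + S * V * S with h1def
  set Z := -(h1⁻¹ * (S * V * C)) with hZdef
  set Q1 := (U⁻¹)ᵀ with hQ1def
  -- basic n-level facts
  have hCS : C * S = S * C := by
    rw [hCdef, hSdef, Matrix.diagonal_mul_diagonal, Matrix.diagonal_mul_diagonal]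
    exact congrArg Matrix.diagonal (funext fun j => mul_comm _ _)
  have honeSC : S * S + C * C = 1 := by
    rw [hCdef, hSdef, Matrix.diagonal_mul_diagonal, Matrix.diagonal_mul_diagonal,
      Matrix.diagonal_add, ← Matrix.diagonal_one]
    exact congrArg Matrix.diagonal (funext fun j => by
      linear_combination Real.sin_sq_add_cos_sq (θ j))
  have hCT : Cᵀ = C := by rw [hCdef]; exact Matrix.diagonal_transpose _
  have hST : Sᵀ = S := by rw [hSdef]; exact Matrix.diagonal_transpose _
  have hUtri : U.BlockTriangular id := by
    intro i j hij
    have hne : i ≠ j := ne_of_gt hij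
    simp [hUdef, Matrix.add_apply, Matrix.one_apply_ne hne, hV i j (le_of_lt hij)]
  have hUdiag : ∀ i, U i i = 1 := fun i => by
    simp [hUdef, Matrix.add_apply, Matrix.one_apply, hV i i le_rfl]
  obtain ⟨hUdet, hUitri, hUidiag⟩ := tri_inv_facts U hUtri hUdiag
  have hUu : IsUnit U.det := hUdet ▸ isUnit_one
  have hh1 : IsUnit h1.det := (Matrix.isUnit_iff_isUnit_det _).mp hinv
  have hh1T : IsUnit (h1ᵀ).det := by rw [Matrix.det_transpose]; exact hh1
  have hZ1 : h1 * Z = -(S*V*C) := by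
    rw [hZdef, mul_neg, ← mul_assoc, Matrix.mul_nonsing_inv _ hh1, one_mul]
  have h1eq : S*U*S + C*C = h1 := by
    rw [hUdef, h1def]
    have e : S*(1+V)*S + C*C = (S*S + C*C) + S*V*S := by noncomm_ring
    rw [e, honeSC]
  have key1 : (S*U*S + C*C) * Z = -(S*U*C) + C*S := by
    rw [h1eq, hZ1, hUdef]
    have e : -(S*(1+V)*C) + C*S = -(S*V*C) + (C*S - S*C) := by noncomm_ring
    rw [e, hCS]; simp
  have hQ1U : Q1 * Uᵀ = 1 := by
    rw [hQ1def, ← Matrix.transpose_mul, Matrix.mul_nonsing_inv _ hUu, Matrix.transpose_one]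
  have hUTeq : Uᵀ = 1 + Vᵀ := by rw [hUdef, Matrix.transpose_add, Matrix.transpose_one]
  have h1Teq : h1ᵀ = 1 + S*Vᵀ*S := by
    rw [h1def]
    simp [Matrix.transpose_add, Matrix.transpose_mul, hST, mul_assoc]
  have hZT : Zᵀ = -(C*Vᵀ*S * (h1ᵀ)⁻¹) := by
    rw [hZdef]
    simp [Matrix.transpose_neg, Matrix.transpose_mul, hCT, hST,
      Matrix.transpose_nonsing_inv, mul_assoc]
  have key2 : (S*S + C*Q1*C) * Zᵀ = -(S*C) + C*Q1*S := by
    have hY : Q1 * (1 + Vᵀ) = 1 := by rw [← hUTeq]; exact hQ1U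
    have hcore := core_ring C S Q1 Vᵀ hCS honeSC hY
    rw [hZT]
    calc (S*S + C*Q1*C) * -(C*Vᵀ*S * (h1ᵀ)⁻¹)
        = ((S*S + C*Q1*C) * -(C*Vᵀ*S)) * (h1ᵀ)⁻¹ := by noncomm_ring
      _ = ((-(S*C) + C*Q1*S) * h1ᵀ) * (h1ᵀ)⁻¹ := by rw [← hcore, h1Teq]
      _ = -(S*C) + C*Q1*S := by rw [mul_assoc, Matrix.mul_nonsing_inv _ hh1T, mul_one]
  -- 2n-level definitions
  set A2 := Matrix.fromBlocks C 0 0 C with hA2def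
  set B2 := Matrix.fromBlocks 0 S S 0 with hB2def
  set W2 := Matrix.fromBlocks 0 Zᵀ Z 0 with hW2def
  set P2 := Matrix.fromBlocks U 0 0 (1 : Matrix (Fin n) (Fin n) ℝ) with hP2def
  set Q2 := Matrix.fromBlocks Q1 0 0 (1 : Matrix (Fin n) (Fin n) ℝ) with hQ2def
  have hnegB2 : Matrix.fromBlocks 0 (-S) (-S) 0 = -B2 := by
    rw [hB2def, Matrix.fromBlocks_neg, neg_zero]
  set M4 := Matrix.fromBlocks A2 B2 (-B2) A2 with hM4def
  set D44 := Matrix.fromBlocks P2 0 0 Q2 with hD44def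
  set X11 := A2*P2*A2 + B2*Q2*B2 with hX11def
  set X12 := -(A2*P2*B2) + B2*Q2*A2 with hX12def
  set X21 := -(B2*P2*A2) + A2*Q2*B2 with hX21def
  set X22 := B2*P2*B2 + A2*Q2*A2 with hX22def
  have hA2T : A2ᵀ = A2 := by
    rw [hA2def, Matrix.fromBlocks_transpose, hCT, Matrix.transpose_zero]
  have hB2T : B2ᵀ = B2 := by
    rw [hB2def, Matrix.fromBlocks_transpose, hST, Matrix.transpose_zero]
  have hW2T : W2ᵀ = W2 := by
    rw [hW2def, Matrix.fromBlocks_transpose, Matrix.transpose_transpose, Matrix.transpose_zero]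
  have hM4T : M4ᵀ = Matrix.fromBlocks A2 (-B2) B2 A2 := by
    rw [hM4def, Matrix.fromBlocks_transpose, hA2T, Matrix.transpose_neg, hB2T]
  have hAB : A2*B2 = B2*A2 := by
    rw [hA2def, hB2def]
    simp [Matrix.fromBlocks_multiply, hCS]
  have honeAB : A2*A2 + B2*B2 = 1 := by
    have hone' : C*C + S*S = 1 := by rw [add_comm]; exact honeSC
    rw [hA2def, hB2def]
    simp [Matrix.fromBlocks_multiply, Matrix.fromBlocks_add, hone', Matrix.fromBlocks_one]
  have hMTM : M4ᵀ * M4 = 1 := by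
    rw [hM4T, hM4def, Matrix.fromBlocks_multiply, ← Matrix.fromBlocks_one]
    refine Matrix.fromBlocks_inj.mpr ⟨?_, ?_, ?_, ?_⟩
    · have : A2*A2 + -B2*-B2 = A2*A2 + B2*B2 := by noncomm_ring
      rw [this, honeAB]
    · have : A2*B2 + -B2*A2 = A2*B2 - B2*A2 := by noncomm_ring
      rw [this, hAB, sub_self]
    · have : B2*A2 + A2*(-B2) = B2*A2 - A2*B2 := by noncomm_ring
      rw [this, hAB, sub_self]
    · rw [add_comm]; exact honeAB
  -- J relations
  have hJ : Jmat (Fin n ⊕ Fin n) ℝ = Matrix.fromBlocks 0 1 (-1) 0 := rfl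
  have hMJMt : M4 * Jmat (Fin n ⊕ Fin n) ℝ * M4ᵀ = Jmat (Fin n ⊕ Fin n) ℝ := by
    rw [hJ, hM4T, hM4def]; exact rotJ A2 B2 hAB honeAB
  have hMJM : M4ᵀ * Jmat (Fin n ⊕ Fin n) ℝ * M4 = Jmat (Fin n ⊕ Fin n) ℝ := by
    rw [hJ, hM4T, hM4def]
    have h1' : A2*(-B2) = (-B2)*A2 := by rw [mul_neg, neg_mul, hAB]
    have h2' : A2*A2 + (-B2)*(-B2) = 1 := by rw [neg_mul_neg]; exact honeAB
    have := rotJ A2 (-B2) h1' h2'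
    rwa [neg_neg] at this
  have hQ2T : Q2ᵀ = Matrix.fromBlocks U⁻¹ 0 0 1 := by
    rw [hQ2def, hQ1def, Matrix.fromBlocks_transpose, Matrix.transpose_transpose,
      Matrix.transpose_zero, Matrix.transpose_one]
  have hP2T : P2ᵀ = Matrix.fromBlocks Uᵀ 0 0 1 := by
    rw [hP2def, Matrix.fromBlocks_transpose, Matrix.transpose_zero, Matrix.transpose_one]
  have hPQ : P2 * Q2ᵀ = 1 := by
    rw [hQ2T, hP2def, Matrix.fromBlocks_multiply]
    simp [Matrix.mul_nonsing_inv _ hUu, Matrix.fromBlocks_one]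
  have hQP : Q2 * P2ᵀ = 1 := by
    have := congrArg Matrix.transpose hPQ
    rwa [Matrix.transpose_mul, Matrix.transpose_transpose, Matrix.transpose_one] at this
  have hPTQ : P2ᵀ * Q2 = 1 := by
    rw [hP2T, hQ2def, hQ1def, Matrix.fromBlocks_multiply]
    have e : Uᵀ * (U⁻¹)ᵀ = 1 := by
      rw [← Matrix.transpose_mul, Matrix.nonsing_inv_mul _ hUu, Matrix.transpose_one]
    simp [e, Matrix.fromBlocks_one]
  have hQTP : Q2ᵀ * P2 = 1 := mul_eq_one_comm.mp hPQ
  have hD44T : D44ᵀ = Matrix.fromBlocks P2ᵀ 0 0 Q2ᵀ := by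
    rw [hD44def, Matrix.fromBlocks_transpose, Matrix.transpose_zero]
  have hDJDt : D44 * Jmat (Fin n ⊕ Fin n) ℝ * D44ᵀ = Jmat (Fin n ⊕ Fin n) ℝ := by
    rw [hJ, hD44T, hD44def, Matrix.fromBlocks_multiply, Matrix.fromBlocks_multiply]
    refine Matrix.fromBlocks_inj.mpr ⟨?_, ?_, ?_, ?_⟩
    · simp
    · simp [hPQ]
    · simp [hQP]
    · simp
  have hDTJD : D44ᵀ * Jmat (Fin n ⊕ Fin n) ℝ * D44 = Jmat (Fin n ⊕ Fin n) ℝ := by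
    rw [hJ, hD44T, hD44def, Matrix.fromBlocks_multiply, Matrix.fromBlocks_multiply]
    refine Matrix.fromBlocks_inj.mpr ⟨?_, ?_, ?_, ?_⟩
    · simp
    · simp [hPTQ]
    · simp [hQTP]
    · simp
  -- X block decomposition
  have hXb : M4 * D44 * M4ᵀ = Matrix.fromBlocks X11 X12 X21 X22 := by
    rw [hM4T, hM4def, hD44def, Matrix.fromBlocks_multiply, Matrix.fromBlocks_multiply]
    refine Matrix.fromBlocks_inj.mpr ⟨?_, ?_, ?_, ?_⟩
    · rw [hX11def]
      simp only [mul_zero, zero_mul, mul_one, one_mul, mul_neg, neg_mul, neg_neg,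
        add_zero, zero_add, neg_zero]
    · rw [hX12def]
      simp only [mul_zero, zero_mul, mul_one, one_mul, mul_neg, neg_mul, neg_neg,
        add_zero, zero_add, neg_zero]
    · rw [hX21def]
      simp only [mul_zero, zero_mul, mul_one, one_mul, mul_neg, neg_mul, neg_neg,
        add_zero, zero_add, neg_zero]
    · rw [hX22def]
      simp only [mul_zero, zero_mul, mul_one, one_mul, mul_neg, neg_mul, neg_neg,
        add_zero, zero_add, neg_zero]
  have hXJXt : Matrix.fromBlocks X11 X12 X21 X22 * Jmat (Fin n ⊕ Fin n) ℝ *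
      (Matrix.fromBlocks X11 X12 X21 X22)ᵀ = Jmat (Fin n ⊕ Fin n) ℝ := by
    rw [← hXb]
    have ht : (M4 * D44 * M4ᵀ)ᵀ = M4 * D44ᵀ * M4ᵀ := by
      simp [Matrix.transpose_mul, Matrix.transpose_transpose, mul_assoc]
    rw [ht]
    calc M4 * D44 * M4ᵀ * Jmat (Fin n ⊕ Fin n) ℝ * (M4 * D44ᵀ * M4ᵀ)
        = M4 * (D44 * (M4ᵀ * Jmat (Fin n ⊕ Fin n) ℝ * M4) * D44ᵀ) * M4ᵀ := by
          noncomm_ring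
      _ = M4 * (D44 * Jmat (Fin n ⊕ Fin n) ℝ * D44ᵀ) * M4ᵀ := by rw [hMJM]
      _ = M4 * Jmat (Fin n ⊕ Fin n) ℝ * M4ᵀ := by rw [hDJDt]
      _ = Jmat (Fin n ⊕ Fin n) ℝ := hMJMt
  have hXtJX : (Matrix.fromBlocks X11 X12 X21 X22)ᵀ * Jmat (Fin n ⊕ Fin n) ℝ *
      Matrix.fromBlocks X11 X12 X21 X22 = Jmat (Fin n ⊕ Fin n) ℝ := by
    rw [← hXb]
    have ht : (M4 * D44 * M4ᵀ)ᵀ = M4 * D44ᵀ * M4ᵀ := by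
      simp [Matrix.transpose_mul, Matrix.transpose_transpose, mul_assoc]
    rw [ht]
    calc M4 * D44ᵀ * M4ᵀ * Jmat (Fin n ⊕ Fin n) ℝ * (M4 * D44 * M4ᵀ)
        = M4 * (D44ᵀ * (M4ᵀ * Jmat (Fin n ⊕ Fin n) ℝ * M4) * D44) * M4ᵀ := by
          noncomm_ring
      _ = M4 * (D44ᵀ * Jmat (Fin n ⊕ Fin n) ℝ * D44) * M4ᵀ := by rw [hMJM]
      _ = M4 * Jmat (Fin n ⊕ Fin n) ℝ * M4ᵀ := by rw [hDTJD]
      _ = Jmat (Fin n ⊕ Fin n) ℝ := hMJMt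
  -- extract the two needed component identities
  have hexp1 : Matrix.fromBlocks X11 X12 X21 X22 * Jmat (Fin n ⊕ Fin n) ℝ *
      (Matrix.fromBlocks X11 X12 X21 X22)ᵀ
      = Matrix.fromBlocks (-(X12*X11ᵀ) + X11*X12ᵀ) (-(X12*X21ᵀ) + X11*X22ᵀ)
          (-(X22*X11ᵀ) + X21*X12ᵀ) (-(X22*X21ᵀ) + X21*X22ᵀ) := by
    rw [hJ, Matrix.fromBlocks_transpose, Matrix.fromBlocks_multiply,
      Matrix.fromBlocks_multiply]
    refine Matrix.fromBlocks_inj.mpr ⟨?_, ?_, ?_, ?_⟩ <;>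
      simp only [mul_zero, zero_mul, mul_one, one_mul, mul_neg, neg_mul, neg_neg,
        add_zero, zero_add, neg_zero] <;> abel
  have h12 : -(X12*X21ᵀ) + X11*X22ᵀ = 1 := by
    have := hXJXt
    rw [hexp1, hJ] at this
    exact (Matrix.fromBlocks_inj.mp this).2.1
  have hexp2 : (Matrix.fromBlocks X11 X12 X21 X22)ᵀ * Jmat (Fin n ⊕ Fin n) ℝ *
      Matrix.fromBlocks X11 X12 X21 X22
      = Matrix.fromBlocks (-(X21ᵀ*X11) + X11ᵀ*X21) (-(X21ᵀ*X12) + X11ᵀ*X22)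
          (-(X22ᵀ*X11) + X12ᵀ*X21) (-(X22ᵀ*X12) + X12ᵀ*X22) := by
    rw [hJ, Matrix.fromBlocks_transpose, Matrix.fromBlocks_multiply,
      Matrix.fromBlocks_multiply]
    refine Matrix.fromBlocks_inj.mpr ⟨?_, ?_, ?_, ?_⟩ <;>
      simp only [mul_zero, zero_mul, mul_one, one_mul, mul_neg, neg_mul, neg_neg,
        add_zero, zero_add, neg_zero] <;> abel
  have h22 : -(X22ᵀ*X12) + X12ᵀ*X22 = 0 := by
    have := hXtJX
    rw [hexp2, hJ] at this
    exact (Matrix.fromBlocks_inj.mp this).2.2.2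
  -- concrete block forms of X22 and X21
  have hX22c : X22 = Matrix.fromBlocks (S*S + C*Q1*C) 0 0 (S*U*S + C*C) := by
    rw [hX22def, hA2def, hB2def, hP2def, hQ2def, Matrix.fromBlocks_multiply,
      Matrix.fromBlocks_multiply, Matrix.fromBlocks_multiply, Matrix.fromBlocks_multiply,
      Matrix.fromBlocks_add]
    refine Matrix.fromBlocks_inj.mpr ⟨?_, ?_, ?_, ?_⟩ <;>
      simp only [mul_zero, zero_mul, mul_one, one_mul, add_zero, zero_add] <;> abel
  have hX21c : X21 = Matrix.fromBlocks 0 (-(S*C) + C*Q1*S) (-(S*U*C) + C*S) 0 := by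
    rw [hX21def, hA2def, hB2def, hP2def, hQ2def, Matrix.fromBlocks_multiply,
      Matrix.fromBlocks_multiply, Matrix.fromBlocks_multiply, Matrix.fromBlocks_multiply,
      Matrix.fromBlocks_neg, Matrix.fromBlocks_add]
    refine Matrix.fromBlocks_inj.mpr ⟨?_, ?_, ?_, ?_⟩ <;>
      simp only [mul_zero, zero_mul, mul_one, one_mul, add_zero, zero_add, neg_zero] <;> abel
  have hX22W : X22 * W2 = X21 := by
    rw [hX22c, hW2def, hX21c, Matrix.fromBlocks_multiply]
    refine Matrix.fromBlocks_inj.mpr ⟨?_, ?_, ?_, ?_⟩ <;>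
      simp only [mul_zero, zero_mul, add_zero, zero_add]
    · exact key2
    · exact key1
  -- the Siegel parabolic block
  set Bm := X11 - X12*W2 with hBmdef
  have hBmX : Bm * X22ᵀ = 1 := by
    have hWX : W2 * X22ᵀ = X21ᵀ := by
      rw [← hW2T, ← Matrix.transpose_mul, hX22W]
    calc Bm * X22ᵀ = X11*X22ᵀ - X12*(W2*X22ᵀ) := by rw [hBmdef]; noncomm_ring
      _ = -(X12*X21ᵀ) + X11*X22ᵀ := by rw [hWX]; noncomm_ring
      _ = 1 := h12
  have hX22Bm : X22ᵀ * Bm = 1 := mul_eq_one_comm.mp hBmX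
  have hBminv : Bm⁻¹ = X22ᵀ := Matrix.inv_eq_right_inv hBmX
  have hBmiT : (Bm⁻¹)ᵀ = X22 := by rw [hBminv, Matrix.transpose_transpose]
  -- determinant
  have hdet2 : (S*U*S + C*C).det = 1 := by
    rw [h1eq, h1def]
    have htri : (1 + S*V*S : Matrix (Fin n) (Fin n) ℝ).BlockTriangular id := by
      intro i j hij
      have hne : i ≠ j := ne_of_gt hij
      rw [hSdef]
      simp [Matrix.add_apply, Matrix.one_apply_ne hne, Matrix.diagonal_mul,
        Matrix.mul_diagonal, hV i j hij.le]
    rw [Matrix.det_of_upperTriangular htri]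
    apply Finset.prod_eq_one
    intro i _
    rw [hSdef]
    simp [Matrix.add_apply, Matrix.one_apply, Matrix.diagonal_mul, Matrix.mul_diagonal,
      hV i i le_rfl]
  have hdet1 : (S*S + C*Q1*C).det = 1 := by
    have htri : (S*S + C*Q1*C).BlockTriangular OrderDual.toDual := by
      intro i j hij
      have hij' : (i : Fin n) < j := hij
      have hne : i ≠ j := ne_of_lt hij'
      have hQ : Q1 i j = 0 := by
        rw [hQ1def, Matrix.transpose_apply]
        exact hUitri (show (id i : Fin n) < id j from hij')
      rw [hCdef, hSdef]
      simp [Matrix.add_apply, Matrix.diagonal_mul_diagonal, Matrix.diagonal_apply_ne _ hne,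
        Matrix.diagonal_mul, Matrix.mul_diagonal, hQ]
    rw [Matrix.det_of_lowerTriangular _ htri]
    apply Finset.prod_eq_one
    intro i _
    have hQ : Q1 i i = 1 := by
      rw [hQ1def, Matrix.transpose_apply]; exact hUidiag i
    rw [hCdef, hSdef]
    simp [Matrix.add_apply, Matrix.diagonal_mul_diagonal, Matrix.diagonal_apply_eq,
      Matrix.diagonal_mul, Matrix.mul_diagonal, hQ]
    linear_combination Real.sin_sq_add_cos_sq (θ i)
  have hdetX22 : X22.det = 1 := by
    rw [hX22c, Matrix.det_fromBlocks_zero₂₁, hdet1, hdet2, mul_one]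
  have hdetBm : Bm.det = 1 := by
    have := congrArg Matrix.det hBmX
    rwa [Matrix.det_mul, Matrix.det_one, Matrix.det_transpose, hdetX22, mul_one] at this
  refine ⟨Bm, X12, hdetBm, ?_, ?_⟩
  · -- symplectic condition
    rw [hBmiT, hJ, Matrix.fromBlocks_transpose, Matrix.transpose_zero,
      Matrix.fromBlocks_multiply, Matrix.fromBlocks_multiply]
    refine Matrix.fromBlocks_inj.mpr ⟨?_, ?_, ?_, ?_⟩ <;>
      simp only [mul_zero, zero_mul, mul_one, one_mul, mul_neg, neg_mul, neg_neg,
        add_zero, zero_add, neg_zero]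
    · have e : Bmᵀ*X22 = (X22ᵀ*Bm)ᵀ := by
        rw [Matrix.transpose_mul, Matrix.transpose_transpose]
      rw [e, hX22Bm, Matrix.transpose_one]
    · rw [hX22Bm]
    · exact h22
  · -- the matrix identity
    rw [hnegB2, ← hM4def, hBmiT]
    have hpN : Matrix.fromBlocks Bm X12 0 X22 *
        Matrix.fromBlocks 1 0 W2 1 = Matrix.fromBlocks X11 X12 X21 X22 := by
      rw [Matrix.fromBlocks_multiply]
      refine Matrix.fromBlocks_inj.mpr ⟨?_, ?_, ?_, ?_⟩ <;>
        simp only [mul_zero, zero_mul, mul_one, one_mul, add_zero, zero_add]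
      · rw [hBmdef]; abel
      · exact hX22W
    rw [hpN, ← hXb, mul_assoc (M4*D44), hMTM, mul_one]
end

section
/- Let $F$ be a field. For $0 \le r \le n$ define $\alpha_r \in \mathrm{Sp}_{4n}(F)$ in $n\times n$ block form by $\alpha_r = \begin{pmatrix} I_n & 0 & 0 & 0 \\ 0 & I_n & 0 & 0 \\ 0 & \tilde I_r & I_n & 0 \\ \tilde I_r & 0 & 0 & I_n \end{pmatrix}$ with $\tilde I_r = \begin{pmatrix} 0_{n-r} & 0 \\ 0 & I_r \end{pmatrix}$. Then the double cosets $P_{4n}(F)\,\alpha_r\, H_{2n,2n}(F)$ for $r = 0, 1, \ldots, n$ are pairwise disjoint, where $P_{4n}$ is the Siegel parabolic of $\mathrm{GSp}_{4n}$ and $H_{2n,2n}$ is the image of the diagonal embedding of $\{(g,g') \in \mathrm{GSp}_{2n}\times\mathrm{GSp}_{2n} : \mu(g) = \mu(g')\}$ in $\mathrm{GSp}_{4n}$. -/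
open Matrix

/-- The matrix `Ĩᵣ = diag(0_{n-r}, I_r)`. -/
def Itil (n r : ℕ) (F : Type*) [Field F] : Matrix (Fin n) (Fin n) F :=
  Matrix.diagonal fun i => if n - r ≤ (i : ℕ) then 1 else 0

/-- The double coset representative `αᵣ ∈ Sp₄ₙ` of the paper (alphardefeq). -/
def alphaMat (n r : ℕ) (F : Type*) [Field F] :
    Matrix ((Fin n ⊕ Fin n) ⊕ (Fin n ⊕ Fin n)) ((Fin n ⊕ Fin n) ⊕ (Fin n ⊕ Fin n)) F :=
  Matrix.fromBlocks 1 0 (Matrix.fromBlocks 0 (Itil n r F) (Itil n r F) 0) 1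

/-- The double coset `P₄ₙ(F) αᵣ H₂ₙ,₂ₙ(F)` as a set of matrices. -/
def cosetSet (n r : ℕ) (F : Type*) [Field F] :
    Set (Matrix ((Fin n ⊕ Fin n) ⊕ (Fin n ⊕ Fin n)) ((Fin n ⊕ Fin n) ⊕ (Fin n ⊕ Fin n)) F) :=
  {x | ∃ (p : Matrix ((Fin n ⊕ Fin n) ⊕ (Fin n ⊕ Fin n)) ((Fin n ⊕ Fin n) ⊕ (Fin n ⊕ Fin n)) F)
      (g g' : Matrix (Fin n ⊕ Fin n) (Fin n ⊕ Fin n) F) (μ ν : F),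
    μ ≠ 0 ∧ pᵀ * Jmat (Fin n ⊕ Fin n) F * p = μ • Jmat (Fin n ⊕ Fin n) F ∧
    p.toBlocks₂₁ = 0 ∧
    ν ≠ 0 ∧ gᵀ * Jmat (Fin n) F * g = ν • Jmat (Fin n) F ∧
    g'ᵀ * Jmat (Fin n) F * g' = ν • Jmat (Fin n) F ∧
    x = p * alphaMat n r F * iota g g'}

-- auxiliary lemmas
lemma jmat_unit (m : Type*) [DecidableEq m] [Fintype m] (R : Type*) [CommRing R] :
    IsUnit (Jmat m R).det := by
  apply Matrix.isUnit_det_of_right_inverse (B := Matrix.fromBlocks 0 (-1) 1 0)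
  simp [Jmat, Matrix.fromBlocks_multiply, ← Matrix.fromBlocks_one]

lemma sympl_det_unit {m : Type*} [DecidableEq m] [Fintype m] {F : Type*} [Field F]
    {x : Matrix (m ⊕ m) (m ⊕ m) F} {c : F} (hc : c ≠ 0)
    (h : xᵀ * Jmat m F * x = c • Jmat m F) : IsUnit x.det := by
  have h2 := congrArg Matrix.det h
  rw [Matrix.det_mul, Matrix.det_mul, Matrix.det_transpose, Matrix.det_smul] at h2
  rw [isUnit_iff_ne_zero]
  intro h0
  rw [h0, mul_zero] at h2
  have hJ : (Jmat m F).det ≠ 0 := by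
    simpa [isUnit_iff_ne_zero] using jmat_unit m F
  rcases mul_eq_zero.mp h2.symm with h3 | h3
  · exact pow_ne_zero _ hc h3
  · exact hJ h3

def Ymat {n : ℕ} {F : Type*} [Field F]
    (x : Matrix ((Fin n ⊕ Fin n) ⊕ (Fin n ⊕ Fin n)) ((Fin n ⊕ Fin n) ⊕ (Fin n ⊕ Fin n)) F) :
    Matrix (Fin n ⊕ Fin n) (Fin n ⊕ Fin n) F :=
  x.submatrix Sum.inr (Sum.map Sum.inl Sum.inl)

def Mmat {n : ℕ} {F : Type*} [Field F] (g : Matrix (Fin n ⊕ Fin n) (Fin n ⊕ Fin n) F) :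
    Matrix (Fin n ⊕ Fin n) (Fin n ⊕ Fin n) F :=
  Matrix.fromBlocks g.toBlocks₁₁ (-g.toBlocks₁₂) (-g.toBlocks₂₁) g.toBlocks₂₂

lemma Ymat_left {n : ℕ} {F : Type*} [Field F]
    {p z : Matrix ((Fin n ⊕ Fin n) ⊕ (Fin n ⊕ Fin n)) ((Fin n ⊕ Fin n) ⊕ (Fin n ⊕ Fin n)) F}
    (h : p.toBlocks₂₁ = 0) : Ymat (p * z) = p.toBlocks₂₂ * Ymat z := by
  have h0 : ∀ a k, p (Sum.inr a) (Sum.inl k) = 0 := fun a k => congrFun (congrFun h a) k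
  ext a b
  simp [Ymat, Matrix.mul_apply, Fintype.sum_sum_type, h0, Matrix.toBlocks₂₂]

lemma Ymat_right {n : ℕ} {F : Type*} [Field F]
    {z : Matrix ((Fin n ⊕ Fin n) ⊕ (Fin n ⊕ Fin n)) ((Fin n ⊕ Fin n) ⊕ (Fin n ⊕ Fin n)) F}
    (g h : Matrix (Fin n ⊕ Fin n) (Fin n ⊕ Fin n) F) :
    Ymat (z * iota g h) = Ymat z * Mmat g := by
  ext a b
  rcases b with b | b <;>
    simp [Ymat, Mmat, iota, Matrix.mul_apply, Fintype.sum_sum_type,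
      Matrix.toBlocks₁₁, Matrix.toBlocks₁₂, Matrix.toBlocks₂₁, Matrix.toBlocks₂₂]

lemma Ymat_alpha {n r : ℕ} {F : Type*} [Field F] :
    Ymat (alphaMat n r F) = Matrix.fromBlocks 0 1 (Itil n r F) 0 := by
  ext a b
  rcases a with a | a <;> rcases b with b | b <;>
    simp [Ymat, alphaMat, Matrix.one_apply]

lemma Mmat_det_unit {n : ℕ} {F : Type*} [Field F] {g : Matrix (Fin n ⊕ Fin n) (Fin n ⊕ Fin n) F}
    (hg : IsUnit g.det) : IsUnit (Mmat g).det := by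
  have hE : (Matrix.fromBlocks 1 0 0 (-1) : Matrix (Fin n ⊕ Fin n) (Fin n ⊕ Fin n) F) *
      g * (Matrix.fromBlocks 1 0 0 (-1)) = Mmat g := by
    conv_lhs => rw [← Matrix.fromBlocks_toBlocks g]
    simp [Mmat, Matrix.fromBlocks_multiply]
  have hEu : IsUnit ((Matrix.fromBlocks 1 0 0 (-1) : Matrix (Fin n ⊕ Fin n) (Fin n ⊕ Fin n) F)).det := by
    apply Matrix.isUnit_det_of_right_inverse (B := Matrix.fromBlocks 1 0 0 (-1))
    simp [Matrix.fromBlocks_multiply, ← Matrix.fromBlocks_one]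
  rw [← hE, Matrix.det_mul, Matrix.det_mul]
  exact (hEu.mul hg).mul hEu

lemma card_ge (n r : ℕ) (hr : r ≤ n) : Fintype.card {i : Fin n // n - r ≤ (i : ℕ)} = r := by
  have e : {i : Fin n // n - r ≤ (i : ℕ)} ≃ Fin r :=
    { toFun := fun i => ⟨(i.1 : ℕ) - (n - r), by have := i.2; have := i.1.2; omega⟩
      invFun := fun j => ⟨⟨n - r + (j : ℕ), by have := j.2; omega⟩, by simp⟩
      left_inv := fun i => by
        ext
        have := i.2
        simp
        omega
      right_inv := fun j => by
        ext
        simp }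
  rw [Fintype.card_congr e, Fintype.card_fin]

lemma rank_Ymat_alpha {n r : ℕ} {F : Type*} [Field F] (hr : r ≤ n) :
    (Ymat (alphaMat n r F)).rank = n + r := by
  classical
  rw [Ymat_alpha]
  rw [← Matrix.rank_mul_eq_left_of_isUnit_det (Jmat (Fin n) F) _ (jmat_unit _ _)]
  have hmul : (Matrix.fromBlocks 0 1 (Itil n r F) 0) * Jmat (Fin n) F
      = Matrix.fromBlocks (-1) 0 0 (Itil n r F) := by
    simp [Jmat, Matrix.fromBlocks_multiply]
  rw [hmul]
  have hdiag : (Matrix.fromBlocks (-1) 0 0 (Itil n r F) : Matrix (Fin n ⊕ Fin n) (Fin n ⊕ Fin n) F)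
      = Matrix.diagonal (Sum.elim (fun _ : Fin n => (-1 : F))
          (fun i : Fin n => if n - r ≤ (i : ℕ) then 1 else 0)) := by
    rw [← Matrix.fromBlocks_diagonal, ← Matrix.diagonal_neg, Matrix.diagonal_one]
    rfl
  rw [hdiag, Matrix.rank_diagonal]
  rw [Fintype.card_congr (Equiv.subtypeSum), Fintype.card_sum]
  congr 1
  · exact (Fintype.card_congr (Equiv.subtypeUnivEquiv fun _ => by simp)).trans
      (Fintype.card_fin n)
  · rw [Fintype.card_congr (Equiv.subtypeEquivRight
      (q := fun i : Fin n => n - r ≤ (i : ℕ)) fun i => by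
        simp only [Sum.elim_inr]
        split <;> simp_all)]
    exact card_ge n r hr

lemma rank_of_mem {n r : ℕ} {F : Type*} [Field F] (hr : r ≤ n)
    {x : Matrix ((Fin n ⊕ Fin n) ⊕ (Fin n ⊕ Fin n)) ((Fin n ⊕ Fin n) ⊕ (Fin n ⊕ Fin n)) F}
    (hx : x ∈ cosetSet n r F) : (Ymat x).rank = n + r := by
  obtain ⟨p, g, g', μ, ν, hμ, hp, h21, hν, hg, hg', hxeq⟩ := hx
  have hpu : IsUnit p.det := sympl_det_unit hμ hp
  have hDu : IsUnit p.toBlocks₂₂.det := by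
    have hd : p.det = p.toBlocks₁₁.det * p.toBlocks₂₂.det := by
      conv_lhs => rw [← Matrix.fromBlocks_toBlocks p, h21]
      rw [Matrix.det_fromBlocks_zero₂₁]
    rw [hd] at hpu
    exact isUnit_of_mul_isUnit_right hpu
  have hgu : IsUnit g.det := sympl_det_unit hν hg
  rw [hxeq, mul_assoc, Ymat_left h21, Ymat_right,
    Matrix.rank_mul_eq_right_of_isUnit_det _ _ hDu,
    Matrix.rank_mul_eq_left_of_isUnit_det _ _ (Mmat_det_unit hgu), rank_Ymat_alpha hr]


/-- Disjointness of the double cosets `P₄ₙ(F) αᵣ H₂ₙ,₂ₙ(F)`, `0 ≤ r ≤ n`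
(the disjointness half of Proposition 2.1 of the paper). -/
theorem stmt_19 (n : ℕ) (F : Type*) [Field F] (r s : ℕ)
    (hr : r ≤ n) (hs : s ≤ n) (hrs : r ≠ s) :
    Disjoint (cosetSet n r F) (cosetSet n s F) := by
  rw [Set.disjoint_left]
  intro x hx hx'
  have h1 := rank_of_mem hr hx
  have h2 := rank_of_mem hs hx'
  omega
end
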